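/- For every n ≥ 2 the following polynomial identity holds identically on ℝⁿ: h_n(x)² − Σ_{j=1}^{n−1} 2^{−j} x_j · ∂(h_n²)/∂x_j(x) = (−1)^{n−1} x_n · ∏_{j=0}^{n−1} h_{n,j}(x). Equivalently (using ∂(h_n²)/∂x_j = −(−2)^j ∏_{k=0}^{j−1} h_{n,k}): h_n² + Σ_{j=1}^{n−1} (−1)^j x_j ∏_{k=0}^{j−1} h_{n,k} = (−1)^{n−1} x_n² ∏_{k=0}^{n−2} h_{n,k}. -/

import Mathlib

open scoped ContDiff

noncomputable section

/-- The polynomial `h_i` in the variables `x_1, …, x_i` (0-indexed: it depends on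
coordinates `0, …, i-1`): `h_0 = 0`, `h_{i+1}(x) = x 0 - (h_i (x ∘ (·+1)))^2`. -/
def hpoly : ℕ → (ℕ → ℝ) → ℝ
  | 0, _ => 0
  | i + 1, x => x 0 - (hpoly i fun k => x (k + 1)) ^ 2

/-- Extension of a vector of `ℝⁿ` by zeros to an infinite sequence. -/
def extv {n : ℕ} (x : Fin n → ℝ) : ℕ → ℝ := fun k => if h : k < n then x ⟨k, h⟩ else 0

/-- `h_{i,j}` as a function on `ℝⁿ` (0-indexed: it depends on coordinates `j, …, i-1`;
in the paper's notation `h_{i,j}(x) = h_{i-j}(x_{j+1}, …, x_i)`). -/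
def hh (n i j : ℕ) (x : Fin n → ℝ) : ℝ := hpoly (i - j) fun k => extv x (j + k)

/-- The gradient of a function on `ℝⁿ`, via the Fréchet derivative. -/
def grad {n : ℕ} (f : (Fin n → ℝ) → ℝ) (x : Fin n → ℝ) : Fin n → ℝ :=
  fun k => fderiv ℝ f x (Pi.single k 1)

/-- The `m`-th standard basis vector of `ℝⁿ` (zero if `m ≥ n`). -/
def evec (n m : ℕ) : Fin n → ℝ := fun k => if (k : ℕ) = m then 1 else 0

def coordL (n j : ℕ) : (Fin n → ℝ) →L[ℝ] ℝ :=
  if h : j < n then ContinuousLinearMap.proj (⟨j, h⟩ : Fin n) else 0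

lemma coordL_apply (n j : ℕ) (v : Fin n → ℝ) : coordL n j v = extv v j := by
  unfold coordL extv
  split <;> simp

def hL (n : ℕ) (x : Fin n → ℝ) : ℕ → ℕ → ((Fin n → ℝ) →L[ℝ] ℝ)
  | 0, _ => 0
  | i + 1, j => coordL n j - (2 * hpoly i fun k => extv x (j + 1 + k)) • hL n x i (j + 1)

lemma hasFDerivAt_hpoly (n : ℕ) (x : Fin n → ℝ) (i j : ℕ) :
    HasFDerivAt (fun y : Fin n → ℝ => hpoly i fun k => extv y (j + k)) (hL n x i j) x := by
  induction i generalizing j with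
  | zero => simpa [hpoly, hL] using hasFDerivAt_const (0 : ℝ) x
  | succ i ih =>
    have h1 : HasFDerivAt (fun y : Fin n → ℝ => extv y j) (coordL n j) x := by
      have h := (coordL n j).hasFDerivAt (x := x)
      rwa [show (⇑(coordL n j) : (Fin n → ℝ) → ℝ) = fun y => extv y j from
        funext fun y => coordL_apply n j y] at h
    have h2 := (ih (j + 1)).mul (ih (j + 1))
    have h3 := h1.sub h2
    have heq : (fun y : Fin n → ℝ => hpoly (i + 1) fun k => extv y (j + k)) =
        fun y : Fin n → ℝ =>
          extv y j - (hpoly i fun k => extv y (j + 1 + k)) ^ 2 := by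
      funext y
      simp only [hpoly, add_zero]
      have hk : (fun k => extv y (j + (k + 1))) = fun k => extv y (j + 1 + k) :=
        funext fun k => by rw [show j + (k + 1) = j + 1 + k from by omega]
      rw [hk]
    rw [heq]
    have h4 : HasFDerivAt
        (fun y : Fin n → ℝ => extv y j - (hpoly i fun k => extv y (j + 1 + k)) ^ 2)
        (hL n x (i + 1) j) x := by
      refine HasFDerivAt.congr_of_eventuallyEq (h3.congr_fderiv ?_) (Filter.Eventually.of_forall fun y => ?_)
      rotate_left
      · simp only [Pi.sub_apply, Pi.mul_apply]; ring
      · apply ContinuousLinearMap.ext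
        intro v
        simp [hL]
        ring
    exact h4

lemma extv_evec_eq_zero {n m j : ℕ} (h : j ≠ m) : extv (evec n m) j = 0 := by
  unfold extv evec
  split <;> simp [h]

lemma extv_evec_eq_one {n m : ℕ} (h : m < n) : extv (evec n m) m = 1 := by
  unfold extv evec
  simp [h]

lemma hL_evec_eq_zero (n : ℕ) (x : Fin n → ℝ) (m : ℕ) :
    ∀ i j, m < j → hL n x i j (evec n m) = 0 := by
  intro i
  induction i with
  | zero => intro j _; simp [hL]
  | succ i ih =>
    intro j hj
    simp [hL, coordL_apply, extv_evec_eq_zero (by omega : j ≠ m), ih (j + 1) (by omega)]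

lemma hL_evec (n : ℕ) (x : Fin n → ℝ) (m : ℕ) (hm : m < n) :
    ∀ i j, j + i = n → j ≤ m →
      hL n x i j (evec n m) =
        (-2 : ℝ) ^ (m - j) * ∏ k ∈ Finset.Ico (j + 1) (m + 1), hh n n k x := by
  intro i
  induction i with
  | zero => intro j h1 h2; omega
  | succ i ih =>
    intro j h1 h2
    have hcoef : (hpoly i fun k => extv x (j + 1 + k)) = hh n n (j + 1) x := by
      unfold hh
      rw [show n - (j + 1) = i from by omega]
    rcases eq_or_lt_of_le h2 with rfl | hlt
    · simp [hL, coordL_apply, extv_evec_eq_one hm,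
        hL_evec_eq_zero n x j i (j + 1) (by omega)]
    · have hrec := ih (j + 1) (by omega) (by omega)
      rw [Finset.prod_eq_prod_Ico_succ_bot (by omega : j + 1 < m + 1)]
      simp only [hL, ContinuousLinearMap.sub_apply, ContinuousLinearMap.smul_apply,
        coordL_apply, extv_evec_eq_zero (by omega : j ≠ m), hcoef, hrec, smul_eq_mul]
      rw [show m - j = (m - (j + 1)) + 1 from by omega]
      ring

lemma hh_rec {n : ℕ} (x : Fin n → ℝ) {j : ℕ} (hj : j < n) :
    hh n n j x = extv x j - (hh n n (j + 1) x) ^ 2 := by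
  unfold hh
  rw [show n - j = (n - (j + 1)) + 1 from by omega]
  simp only [hpoly, add_zero]
  have hk : (fun k => extv x (j + (k + 1))) = fun k => extv x (j + 1 + k) :=
    funext fun k => by rw [show j + (k + 1) = j + 1 + k from by omega]
  rw [hk]

lemma hh_last {n : ℕ} (x : Fin n → ℝ) (hn : 1 ≤ n) : hh n n (n - 1) x = extv x (n - 1) := by
  unfold hh
  rw [show n - (n - 1) = 1 from by omega]
  simp [hpoly]

lemma telescope {n : ℕ} (hn : 2 ≤ n) (x : Fin n → ℝ) :
    (hh n n 0 x) ^ 2 +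
        ∑ m ∈ Finset.range (n - 1),
          (-1 : ℝ) ^ (m + 1) * extv x m * ∏ k ∈ Finset.range (m + 1), hh n n k x
      = (-1 : ℝ) ^ (n - 1) * (extv x (n - 1)) ^ 2 * ∏ k ∈ Finset.range (n - 1), hh n n k x := by
  set A : ℕ → ℝ := fun m => (-1 : ℝ) ^ m * (hh n n m x) ^ 2 * ∏ k ∈ Finset.range m, hh n n k x
    with hA
  have hsum : ∀ m ∈ Finset.range (n - 1),
      (-1 : ℝ) ^ (m + 1) * extv x m * ∏ k ∈ Finset.range (m + 1), hh n n k x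
        = A (m + 1) - A m := by
    intro m hm
    simp only [Finset.mem_range] at hm
    have hx : extv x m = hh n n m x + (hh n n (m + 1) x) ^ 2 := by
      rw [hh_rec x (by omega : m < n)]; ring
    simp only [hA]
    rw [hx, Finset.prod_range_succ, pow_succ]
    ring
  rw [Finset.sum_congr rfl hsum, Finset.sum_range_sub A]
  have hA0 : A 0 = (hh n n 0 x) ^ 2 := by simp [hA]
  rw [hA0]
  simp only [hA]
  rw [hh_last x (by omega)]
  ring

/-- For every `n ≥ 2`, identically on `ℝⁿ`:
`h_n² - Σ_{j=1}^{n-1} 2^{-j} x_j ∂(h_n²)/∂x_j = (-1)^{n-1} x_n ∏_{j=0}^{n-1} h_{n,j}`,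
and equivalently
`h_n² + Σ_{j=1}^{n-1} (-1)^j x_j ∏_{k=0}^{j-1} h_{n,k} = (-1)^{n-1} x_n² ∏_{k=0}^{n-2} h_{n,k}`.
(0-indexed: the paper's `x_j` is coordinate `j - 1`; `extv x m` is the `m`-th coordinate of `x`
and `evec n m` the `m`-th basis vector.) -/
theorem stmt_15 (n : ℕ) (hn : 2 ≤ n) (x : Fin n → ℝ) :
    ((hh n n 0 x) ^ 2 -
        ∑ m ∈ Finset.range (n - 1),
          (extv x m / 2 ^ (m + 1)) * fderiv ℝ (fun y => (hh n n 0 y) ^ 2) x (evec n m)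
      = (-1 : ℝ) ^ (n - 1) * extv x (n - 1) * ∏ m ∈ Finset.range n, hh n n m x) ∧
    ((hh n n 0 x) ^ 2 +
        ∑ m ∈ Finset.range (n - 1),
          (-1 : ℝ) ^ (m + 1) * extv x m * ∏ k ∈ Finset.range (m + 1), hh n n k x
      = (-1 : ℝ) ^ (n - 1) * (extv x (n - 1)) ^ 2 * ∏ k ∈ Finset.range (n - 1), hh n n k x) := by
  have hmain := telescope hn x
  have hfun : (fun y : Fin n → ℝ => (hh n n 0 y) ^ 2)
      = fun y : Fin n → ℝ =>
          (hpoly n fun k => extv y (0 + k)) * (hpoly n fun k => extv y (0 + k)) := by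
    funext y
    rw [sq]
    rfl
  have h2 : HasFDerivAt (fun y : Fin n → ℝ => (hh n n 0 y) ^ 2)
      (hh n n 0 x • hL n x n 0 + hh n n 0 x • hL n x n 0) x := by
    rw [hfun]
    exact (hasFDerivAt_hpoly n x n 0).mul (hasFDerivAt_hpoly n x n 0)
  have hfd := h2.fderiv
  have hterm : ∀ m ∈ Finset.range (n - 1),
      (extv x m / 2 ^ (m + 1)) * fderiv ℝ (fun y => (hh n n 0 y) ^ 2) x (evec n m)
        = -((-1 : ℝ) ^ (m + 1) * extv x m * ∏ k ∈ Finset.range (m + 1), hh n n k x) := by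
    intro m hm
    simp only [Finset.mem_range] at hm
    rw [hfd]
    have he := hL_evec n x m (by omega) n 0 (by omega) (by omega)
    simp only [Nat.sub_zero, Nat.zero_add] at he
    simp only [ContinuousLinearMap.add_apply, ContinuousLinearMap.smul_apply, smul_eq_mul, he]
    rw [Finset.range_eq_Ico, Finset.prod_eq_prod_Ico_succ_bot (by omega : 0 < m + 1)]
    rw [show ((-2 : ℝ)) ^ m = (-1) ^ m * 2 ^ m from by rw [← neg_one_mul, mul_pow]]
    have h2 : ((2 : ℝ)) ^ (m + 1) ≠ 0 := by positivity
    field_simp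
    ring
  have hprod : ∏ m ∈ Finset.range n, hh n n m x
      = (∏ m ∈ Finset.range (n - 1), hh n n m x) * extv x (n - 1) := by
    have hr : Finset.range n = Finset.range ((n - 1) + 1) := by
      rw [show (n - 1) + 1 = n from by omega]
    rw [hr, Finset.prod_range_succ, hh_last x (by omega)]
  constructor
  · rw [Finset.sum_congr rfl hterm]
    simp only [Finset.sum_neg_distrib, sub_neg_eq_add]
    rw [hmain, hprod]
    ring
  · exact hmain
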